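/- Let P be a poset and α > 0 a limit ordinal. For f ∈ P^α define I(f) = {s ∈ P^{<α} : there exists β < α with s ≤ f↾β in P^{<α}}, an initial segment of the quasi-order P^{<α}. Then the map f ↦ I(f) from P^α into I(P^{<α}) is order-generating: for all f, g ∈ P^α, if I(f) ⊆ I(g) then f ≤ g in P^α. -/

import Mathlib

universe u v

open Set

/-- `r` is an initial segment of `X ⊆ ℕ`: `r ⊆ X` and every element of `X` not in `r`
is greater than every element of `r`. -/
def NatInitSeg (r : Finset ℕ) (X : Set ℕ) : Prop :=
  ↑r ⊆ X ∧ ∀ x ∈ X, x ∉ r → ∀ y ∈ r, y < x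

/-- `B` is a barrier: an infinite inclusion-antichain of finite subsets of `ℕ` such that
every infinite subset of the base has an initial segment in `B`. -/
def IsBarrier (B : Set (Finset ℕ)) : Prop :=
  B.Infinite ∧
  (∀ x ∈ B, ∀ y ∈ B, x ⊆ y → x = y) ∧
  (∀ X : Set ℕ, X ⊆ (⋃ b ∈ B, (↑b : Set ℕ)) → X.Infinite → ∃ r ∈ B, NatInitSeg r X)

/-- `t` is a proper initial segment of the finite set `s`. -/
def FinsetProperInitSeg (t s : Finset ℕ) : Prop :=
  t ⊆ s ∧ t ≠ s ∧ ∀ x ∈ s, x ∉ t → ∀ y ∈ t, y < x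

/-- The shift-extension relation `r ◁ s`: `min r < min s` and `r \ {min r}` is a proper
initial segment of `s`. -/
def ShiftExt (r s : Finset ℕ) : Prop :=
  ∃ m ∈ r, (∀ x ∈ r, m ≤ x) ∧ (∀ y ∈ s, m < y) ∧ FinsetProperInitSeg (r.erase m) s

/-- A map `f` from a barrier `B` into `X` is good for the relation `le`. -/
def GoodOn {X : Type*} (le : X → X → Prop) (B : Set (Finset ℕ)) (f : Finset ℕ → X) : Prop :=
  ∃ s ∈ B, ∃ t ∈ B, ShiftExt s t ∧ le (f s) (f t)

/-- Well quasi-order for a relation: every `ℕ`-sequence is good. -/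
def IsWqoRel {X : Type*} (le : X → X → Prop) : Prop :=
  ∀ p : ℕ → X, ∃ i j : ℕ, i < j ∧ le (p i) (p j)

/-- Better quasi-order: every map from every barrier is good. -/
def IsBqoRel {X : Type*} (le : X → X → Prop) : Prop :=
  ∀ B : Set (Finset ℕ), IsBarrier B → ∀ f : Finset ℕ → X, GoodOn le B f

/-- The (strict) lexicographic order on finite subsets of `ℕ`:
`r < s` iff `r ≠ s` and the least element of the symmetric difference belongs to `r`. -/
def FinsetLexLt (r s : Finset ℕ) : Prop :=
  r ≠ s ∧ ∀ m ∈ symmDiff r s, (∀ x ∈ symmDiff r s, m ≤ x) → m ∈ r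

/-- The barrier `B` has lexicographic order type `≤ α`: there is a lex-strictly-increasing
ordinal-valued function on `B` bounded by `α`. -/
def BarrierTypeLE (B : Set (Finset ℕ)) (α : Ordinal.{0}) : Prop :=
  ∃ g : Finset ℕ → Ordinal.{0}, (∀ b ∈ B, g b < α) ∧
    ∀ b₁ ∈ B, ∀ b₂ ∈ B, FinsetLexLt b₁ b₂ → g b₁ < g b₂

/-- `α`-wqo: every map from a barrier of order type `≤ α` is good. -/
def IsAlphaWqoRel {X : Type*} (le : X → X → Prop) (α : Ordinal.{0}) : Prop :=
  ∀ B : Set (Finset ℕ), IsBarrier B → BarrierTypeLE B α →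
    ∀ f : Finset ℕ → X, GoodOn le B f

/-- `σ`-bqo: a wqo which is a countable union of sets, each bqo in the induced order. -/
def IsSigmaBqoRel {X : Type*} (le : X → X → Prop) : Prop :=
  IsWqoRel le ∧
  ∃ S : ℕ → Set X, (⋃ n, S n) = Set.univ ∧
    ∀ n, IsBqoRel (fun x y : S n => le x.1 y.1)

/-- Sequences of length `α` from `P`. -/
abbrev OrdSeq (P : Type u) (α : Ordinal.{0}) := {β : Ordinal.{0} // β < α} → P

/-- The embeddability quasi-order on `P^α`. -/
def OrdSeqLE {P : Type u} [Preorder P] {α : Ordinal.{0}} (f g : OrdSeq P α) : Prop :=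
  ∃ ρ : {β : Ordinal.{0} // β < α} → {β : Ordinal.{0} // β < α},
    StrictMono ρ ∧ ∀ γ, f γ ≤ g (ρ γ)

/-- Sequences of length `< α` from `P`. -/
abbrev OrdSeqLt (P : Type u) (α : Ordinal.{0}) :=
  Σ β : {β : Ordinal.{0} // β < α}, ({γ : Ordinal.{0} // γ < β.1} → P)

/-- The embeddability quasi-order on `P^{<α}`. -/
def OrdSeqLtLE {P : Type u} [Preorder P] {α : Ordinal.{0}} (f g : OrdSeqLt P α) : Prop :=
  ∃ ρ : {γ : Ordinal.{0} // γ < f.1.1} → {γ : Ordinal.{0} // γ < g.1.1},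
    StrictMono ρ ∧ ∀ δ, f.2 δ ≤ g.2 (ρ δ)

/-- The Dress–Schiffels relation: `f ≤DS g` iff `f i < g i` for every `i` maximal in
`Δ(f,g) = {j | f j ≠ g j}`. -/
def DSle {I : Type u} [PartialOrder I] {P : I → Type v} [∀ i, PartialOrder (P i)]
    (f g : ∀ i, P i) : Prop :=
  ∀ i : I, Maximal (fun j => f j ≠ g j) i → f i < g i

/-- The underlying set of the Dress–Schiffels product: finitely supported functions. -/
abbrev DSProd (I : Type u) [PartialOrder I] (P : I → Type v) [∀ i, PartialOrder (P i)]
    [∀ i, OrderBot (P i)] :=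
  {f : ∀ i, P i // {i | f i ≠ ⊥}.Finite}

/-- For a limit ordinal `α > 0`, the map `f ↦ I(f)` sending `f ∈ P^α` to the initial
segment of `P^{<α}` generated by its proper restrictions is order-generating. -/
theorem stmt_2 {P : Type u} [PartialOrder P] (α : Ordinal.{0}) (hα : Order.IsSuccLimit α)
    (Iseg : OrdSeq P α → Set (OrdSeqLt P α))
    (hI : ∀ f, Iseg f = {s | ∃ β : {β : Ordinal.{0} // β < α},
      OrdSeqLtLE s ⟨β, fun γ => f ⟨γ.1, γ.2.trans β.2⟩⟩}) :
    (∀ f : OrdSeq P α, ∀ s t : OrdSeqLt P α, OrdSeqLtLE s t → t ∈ Iseg f → s ∈ Iseg f) ∧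
    (∀ f g : OrdSeq P α, Iseg f ⊆ Iseg g → OrdSeqLE f g) := by
  have hsucc : ∀ γ : {β : Ordinal.{0} // β < α}, γ.1 + 1 < α := by
    intro γ
    rw [Ordinal.add_one_eq_succ]
    exact hα.succ_lt γ.2
  constructor
  · intro f s t hst ht
    rw [hI] at ht ⊢
    obtain ⟨β, ρ, hρ, hle⟩ := ht
    obtain ⟨ρ', hρ', hle'⟩ := hst
    exact ⟨β, ρ ∘ ρ', hρ.comp hρ', fun δ => (hle' δ).trans (hle (ρ' δ))⟩
  · intro f g hsub
    have hlt1 : ∀ γ : {β : Ordinal.{0} // β < α}, γ.1 < γ.1 + 1 := by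
      intro γ
      rw [Ordinal.add_one_eq_succ]
      exact Order.lt_succ _
    set A : {β : Ordinal.{0} // β < α} → Set Ordinal.{0} := fun γ =>
      {δ | ∃ (hδ : δ < α)
        (σ : {x : Ordinal.{0} // x < γ.1 + 1} → {β : Ordinal.{0} // β < α}),
        StrictMono σ ∧ (∀ x, f ⟨x.1, x.2.trans (hsucc γ)⟩ ≤ g (σ x)) ∧
        σ ⟨γ.1, hlt1 γ⟩ = ⟨δ, hδ⟩} with hAdef
    have hne : ∀ γ, (A γ).Nonempty := by
      intro γ
      have hs : (⟨⟨γ.1 + 1, hsucc γ⟩, fun x => f ⟨x.1, x.2.trans (hsucc γ)⟩⟩ :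
          OrdSeqLt P α) ∈ Iseg f := by
        rw [hI]
        exact ⟨⟨γ.1 + 1, hsucc γ⟩, id, strictMono_id, fun δ => le_refl _⟩
      have hs' := hsub hs
      rw [hI] at hs'
      obtain ⟨β, ρ, hρ, hle⟩ := hs'
      refine ⟨(ρ ⟨γ.1, hlt1 γ⟩).1, (ρ ⟨γ.1, hlt1 γ⟩).2.trans β.2,
        fun x => ⟨(ρ x).1, (ρ x).2.trans β.2⟩, ?_, ?_, rfl⟩
      · intro a b hab
        exact hρ hab
      · intro x
        exact hle x
    have hmem : ∀ γ, sInf (A γ) ∈ A γ := fun γ => csInf_mem (hne γ)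
    have hltα : ∀ γ, sInf (A γ) < α := by
      intro γ
      obtain ⟨h, _⟩ := hmem γ
      exact h
    refine ⟨fun γ => ⟨sInf (A γ), hltα γ⟩, ?_, ?_⟩
    · intro γ γ' hγγ'
      obtain ⟨hδ, σ, hσ, hf, htop⟩ := hmem γ'
      have hle1 : γ.1 + 1 ≤ γ'.1 + 1 := by
        exact add_le_add_left (le_of_lt (show γ.1 < γ'.1 from hγγ')) 1
      have hγtop : γ.1 < γ'.1 + 1 := (hlt1 γ).trans_le hle1
      show sInf (A γ) < sInf (A γ')
      have hmem2 : (σ ⟨γ.1, hγtop⟩).1 ∈ A γ := by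
        refine ⟨(σ ⟨γ.1, hγtop⟩).2,
          fun x => σ ⟨x.1, lt_of_lt_of_le x.2 hle1⟩, ?_, ?_, rfl⟩
        · intro a b hab
          exact hσ hab
        · intro x
          exact hf ⟨x.1, lt_of_lt_of_le x.2 hle1⟩
      have h1 : sInf (A γ) ≤ (σ ⟨γ.1, hγtop⟩).1 := csInf_le (OrderBot.bddBelow _) hmem2
      have h2 : (σ ⟨γ.1, hγtop⟩).1 < (σ ⟨γ'.1, hlt1 γ'⟩).1 := hσ hγγ'
      have h3 : (σ ⟨γ'.1, hlt1 γ'⟩).1 = sInf (A γ') := by rw [htop]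
      exact lt_of_le_of_lt h1 (h3 ▸ h2)
    · intro γ
      obtain ⟨hδ, σ, hσ, hf, htop⟩ := hmem γ
      have := hf ⟨γ.1, hlt1 γ⟩
      rw [htop] at this
      exact this
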